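/- arXiv:1305.7288 — 6 statements merged into one kernel-verified Lean document; each statement's English description precedes it below -/
import Mathlib

section
/- The Stokes groupoid structure on ℂ² given by s(z,u) = z, t(z,u) = exp(u z^{k−1}) z, and composition (z₂,u₂)·(z₁,u₁) = (z₁, u₂ exp((k−1)u₁z₁^{k−1}) + u₁) (defined when z₂ = t(z₁,u₁)) is associative, has identities (z,0), and satisfies the target compatibility t((z₂,u₂)·(z₁,u₁)) = t(z₂,u₂). -/
/-- The Stokes groupoid `Sto_k` on `ℂ²`:
`s(z,u) = z`, `t(z,u) = exp(u z^{k-1}) z`, and composition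
`(z₂,u₂)·(z₁,u₁) = (z₁, u₂ exp((k−1) u₁ z₁^{k-1}) + u₁)` (defined when
`z₂ = t(z₁,u₁)`).  The composition is associative, `(z,0)` are identities, and
the target of a composite equals the target of the left factor. -/
theorem stokes_groupoid_axioms (k : ℕ) (hk : 1 ≤ k) :
    ∀ (t : ℂ × ℂ → ℂ), (t = fun p => Complex.exp (p.2 * p.1 ^ (k - 1)) * p.1) →
    ∀ (m : ℂ × ℂ → ℂ × ℂ → ℂ × ℂ),
      (m = fun p q =>
        (q.1, p.2 * Complex.exp (((k : ℂ) - 1) * q.2 * q.1 ^ (k - 1)) + q.2)) →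
    -- target compatibility
    (∀ p q : ℂ × ℂ, p.1 = t q → t (m p q) = t p) ∧
    -- associativity on composable triples
    (∀ p q r : ℂ × ℂ, p.1 = t q → q.1 = t r → m (m p q) r = m p (m q r)) ∧
    -- identity laws
    (∀ p : ℂ × ℂ, m (t p, 0) p = p ∧ m p (p.1, 0) = p) := by
  intro t ht m hm
  subst ht hm
  have hcast : ((k - 1 : ℕ) : ℂ) = (k : ℂ) - 1 := by
    push_cast [Nat.cast_sub hk]; ring
  have key : ∀ z u : ℂ,
      (Complex.exp (u * z ^ (k - 1)) * z) ^ (k - 1)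
        = Complex.exp (((k : ℂ) - 1) * u * z ^ (k - 1)) * z ^ (k - 1) := by
    intro z u
    rw [mul_pow, ← Complex.exp_nat_mul, hcast]
    ring_nf
  refine ⟨?_, ?_, ?_⟩
  · rintro ⟨p1, p2⟩ ⟨q1, q2⟩ h
    simp only at h ⊢
    rw [h, key, add_mul, Complex.exp_add]
    ring
  · rintro ⟨p1, p2⟩ ⟨q1, q2⟩ ⟨r1, r2⟩ hp hq
    simp only at hp hq ⊢
    rw [hq, key]
    refine Prod.ext rfl ?_
    simp only
    have h2 : ((k : ℂ) - 1) * (q2 * Complex.exp (((k:ℂ) - 1) * r2 * r1 ^ (k - 1)) + r2)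
          * r1 ^ (k - 1)
        = ((k : ℂ) - 1) * q2 * (Complex.exp (((k:ℂ) - 1) * r2 * r1 ^ (k - 1)) * r1 ^ (k - 1))
          + ((k : ℂ) - 1) * r2 * r1 ^ (k - 1) := by ring
    rw [h2, Complex.exp_add]
    ring
  · rintro ⟨p1, p2⟩
    simp
end

section
/- The map E(z,u) = (z, (e^{u z^{k−1}} − 1)/z^{k−1}) (extended by E(0,u) = (0,u) when k ≥ 2, using the removable singularity) is a groupoid homomorphism from the Stokes groupoid Sto_k to the twisted pair groupoid Pair(ℂ, k·0): it intertwines the source and target maps and composition laws of the two groupoids. -/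
open Complex

/-- The exponential map `E(z,u) = (z, (e^{u z^{k-1}} − 1)/z^{k-1})`, extended
holomorphically over `z = 0` by `E(0,u) = (0,u)` when `k ≥ 2`, is a groupoid
homomorphism from the Stokes groupoid `Sto_k` to the twisted pair groupoid
`Pair(ℂ, k·0)`: it preserves sources and targets, lands in
`{(z,v) : 1 + v z^{k-1} ≠ 0}`, and intertwines the composition laws. -/
theorem exp_homomorphism_stokes_to_pair (k : ℕ) (hk : 1 ≤ k) :
    ∀ (E : ℂ × ℂ → ℂ × ℂ),
      (E = fun p => (p.1, if p.1 ^ (k - 1) = 0 then p.2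
          else (Complex.exp (p.2 * p.1 ^ (k - 1)) - 1) / p.1 ^ (k - 1))) →
    ∀ (tSto : ℂ × ℂ → ℂ), (tSto = fun p => Complex.exp (p.2 * p.1 ^ (k - 1)) * p.1) →
    ∀ (mSto : ℂ × ℂ → ℂ × ℂ → ℂ × ℂ),
      (mSto = fun p q =>
        (q.1, p.2 * Complex.exp (((k : ℂ) - 1) * q.2 * q.1 ^ (k - 1)) + q.2)) →
    ∀ (tPair : ℂ × ℂ → ℂ), (tPair = fun p => (1 + p.2 * p.1 ^ (k - 1)) * p.1) →
    ∀ (mPair : ℂ × ℂ → ℂ × ℂ → ℂ × ℂ),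
      (mPair = fun p q => (q.1, p.2 * (1 + q.2 * q.1 ^ (k - 1)) ^ k + q.2)) →
    -- E preserves sources and targets and lands in Pair(ℂ, k·0)
    (∀ p : ℂ × ℂ, (E p).1 = p.1 ∧ tPair (E p) = tSto p ∧
        1 + (E p).2 * (E p).1 ^ (k - 1) ≠ 0) ∧
    -- E intertwines the composition laws
    (∀ p q : ℂ × ℂ, p.1 = tSto q → E (mSto p q) = mPair (E p) (E q)) := by
  intro E hE tSto htS mSto hmS tPair htP mPair hmP
  subst hE htS hmS htP hmP
  have hc : ((k : ℂ) - 1) = ((k - 1 : ℕ) : ℂ) := by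
    push_cast [Nat.cast_sub hk]; ring
  constructor
  · intro p
    by_cases h : p.1 ^ (k - 1) = 0
    · refine ⟨rfl, ?_, ?_⟩ <;> simp [h]
    · refine ⟨rfl, ?_, ?_⟩
      · simp only [if_neg h]
        rw [div_mul_cancel₀ _ h]
        ring
      · simp only [if_neg h]
        rw [div_mul_cancel₀ _ h]
        simp [Complex.exp_ne_zero]
  · intro p q hpq
    by_cases h : q.1 ^ (k - 1) = 0
    · have hp1 : p.1 ^ (k - 1) = 0 := by
        rw [hpq]; simp [mul_pow, h]
      simp [h, hp1]
    · set a := q.1 ^ (k - 1) with ha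
      set b := Complex.exp (q.2 * a) with hb
      have hbne : b ≠ 0 := Complex.exp_ne_zero _
      have hbp : b ^ (k - 1) = Complex.exp (((k : ℂ) - 1) * q.2 * a) := by
        rw [hc, mul_assoc, ← Complex.exp_nat_mul]
      have hp1 : p.1 ^ (k - 1) = b ^ (k - 1) * a := by
        rw [hpq, mul_pow]
      have hp1ne : p.1 ^ (k - 1) ≠ 0 := by
        rw [hp1]; exact mul_ne_zero (pow_ne_zero _ hbne) h
      have hbk : b ^ k = b ^ (k - 1) * b := by
        conv_lhs => rw [← Nat.sub_add_cancel hk, pow_succ]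
      simp only [← ha, if_neg h, if_neg hp1ne, Prod.mk.injEq, true_and]
      rw [div_mul_cancel₀ _ h, ← hb]
      have hnum : Complex.exp ((p.2 * Complex.exp (((k : ℂ) - 1) * q.2 * a) + q.2) * a)
          = Complex.exp (p.2 * p.1 ^ (k - 1)) * b := by
        rw [← hbp, hp1, add_mul, Complex.exp_add, hb, mul_assoc]
      rw [hnum, hp1]
      have h1 : (1 : ℂ) + (b - 1) = b := by ring
      rw [h1, hbk]
      field_simp
      ring
end

section
/- For k ≥ 2, the function S_k(z,u) = (1 − e^{−u(k−1)z^{k−1}})/((k−1)z^{k−1}) (extended across z = 0 by S_k(0,u) = u) is additive on the Stokes groupoid Sto_k: whenever z₂ = e^{u₁z₁^{k−1}} z₁, one has S_k(z₁, u₂e^{(k−1)u₁z₁^{k−1}} + u₁) = S_k(z₂,u₂) + S_k(z₁,u₁). -/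
/-- For `k ≥ 2`, the function
`S_k(z,u) = (1 − e^{−u(k−1)z^{k−1}})/((k−1)z^{k−1})`, extended across `z = 0`
by `S_k(0,u) = u`, is additive on the Stokes groupoid `Sto_k`: whenever
`z₂ = e^{u₁ z₁^{k−1}} z₁` (i.e. the arrows `(z₂,u₂)` and `(z₁,u₁)` are
composable) one has
`S_k(z₁, u₂ e^{(k−1)u₁z₁^{k−1}} + u₁) = S_k(z₂,u₂) + S_k(z₁,u₁)`. -/
theorem stokes_additive_function (k : ℕ) (hk : 2 ≤ k) :
    ∀ (S : ℂ × ℂ → ℂ),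
      (S = fun p => if p.1 = 0 then p.2
        else (1 - Complex.exp (-p.2 * ((k : ℂ) - 1) * p.1 ^ (k - 1))) /
          (((k : ℂ) - 1) * p.1 ^ (k - 1))) →
    ∀ z₁ u₁ z₂ u₂ : ℂ, z₂ = Complex.exp (u₁ * z₁ ^ (k - 1)) * z₁ →
      S (z₁, u₂ * Complex.exp (((k : ℂ) - 1) * u₁ * z₁ ^ (k - 1)) + u₁) =
        S (z₂, u₂) + S (z₁, u₁) := by
  intro S hS z₁ u₁ z₂ u₂ hz₂
  subst hS hz₂
  have hk1 : k - 1 ≠ 0 := by omega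
  have hcast : ((k - 1 : ℕ) : ℂ) = (k : ℂ) - 1 := by
    push_cast [Nat.cast_sub (by omega : 1 ≤ k)]; ring
  have hc : (k : ℂ) - 1 ≠ 0 := by
    rw [← hcast]
    exact_mod_cast Nat.cast_ne_zero.mpr hk1
  by_cases h1 : z₁ = 0
  · subst h1
    simp [zero_pow hk1]
  · have hw : z₁ ^ (k - 1) ≠ 0 := pow_ne_zero _ h1
    have h2 : Complex.exp (u₁ * z₁ ^ (k - 1)) * z₁ ≠ 0 :=
      mul_ne_zero (Complex.exp_ne_zero _) h1
    set c : ℂ := (k : ℂ) - 1 with hcdef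
    set w : ℂ := z₁ ^ (k - 1) with hwdef
    have hpow : (Complex.exp (u₁ * w) * z₁) ^ (k - 1) =
        Complex.exp (c * u₁ * w) * w := by
      rw [mul_pow, ← Complex.exp_nat_mul, hwdef, hcast]
      ring_nf
    simp only [if_neg h1, if_neg h2, hpow]
    set E : ℂ := Complex.exp (c * u₁ * w) with hEdef
    have hE : E ≠ 0 := Complex.exp_ne_zero _
    have he1 : Complex.exp (-(u₂ * E + u₁) * c * w) =
        Complex.exp (-u₂ * c * (E * w)) * Complex.exp (-u₁ * c * w) := by
      rw [← Complex.exp_add]; ring_nf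
    have he2 : Complex.exp (-u₁ * c * w) = E⁻¹ := by
      rw [hEdef, ← Complex.exp_neg]; ring_nf
    rw [he1, he2]
    field_simp
    ring
end

section
/- For k ≥ 2, the function S'_k(z,u) = (1 − (1 + uz^{k−1})^{−(k−1)})/((k−1)z^{k−1}) (extended by S'_k(0,u) = u) is additive on the twisted pair groupoid Pair(ℂ,k·0): whenever z₂ = (1 + u₁z₁^{k−1})z₁, one has S'_k(z₁, u₂(1 + u₁z₁^{k−1})^k + u₁) = S'_k(z₂,u₂) + S'_k(z₁,u₁). -/
/-- For `k ≥ 2`, the function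
`S'_k(z,u) = (1 − (1 + u z^{k−1})^{−(k−1)})/((k−1)z^{k−1})`, extended across
`z = 0` by `S'_k(0,u) = u`, is additive on the twisted pair groupoid
`Pair(ℂ, k·0)`: for arrows `(z₁,u₁)`, `(z₂,u₂)` of the groupoid (so that
`1 + uᵢ zᵢ^{k−1} ≠ 0`) which are composable, i.e. `z₂ = (1 + u₁z₁^{k−1})z₁`,
one has `S'_k(z₁, u₂(1 + u₁z₁^{k−1})^k + u₁) = S'_k(z₂,u₂) + S'_k(z₁,u₁)`. -/
theorem pair_additive_function (k : ℕ) (hk : 2 ≤ k) :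
    ∀ (S' : ℂ × ℂ → ℂ),
      (S' = fun p => if p.1 = 0 then p.2
        else (1 - ((1 + p.2 * p.1 ^ (k - 1)) ^ (k - 1))⁻¹) /
          (((k : ℂ) - 1) * p.1 ^ (k - 1))) →
    ∀ z₁ u₁ z₂ u₂ : ℂ,
      1 + u₁ * z₁ ^ (k - 1) ≠ 0 → 1 + u₂ * z₂ ^ (k - 1) ≠ 0 →
      z₂ = (1 + u₁ * z₁ ^ (k - 1)) * z₁ →
      S' (z₁, u₂ * (1 + u₁ * z₁ ^ (k - 1)) ^ k + u₁) =
        S' (z₂, u₂) + S' (z₁, u₁) := by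
  intro S' hS z₁ u₁ z₂ u₂ h1 h2 hz
  subst hS hz
  obtain ⟨m, rfl⟩ : ∃ m, k = m + 1 := ⟨k - 1, (Nat.succ_pred_eq_of_pos (by omega)).symm⟩
  have hm : 1 ≤ m := by omega
  simp only [Nat.add_sub_cancel] at *
  by_cases hz1 : z₁ = 0
  · simp [hz1, zero_pow (by omega : m ≠ 0)]
  · have hmz : z₁ ^ m ≠ 0 := pow_ne_zero _ hz1
    set a : ℂ := 1 + u₁ * z₁ ^ m with ha
    have hz2 : a * z₁ ≠ 0 := mul_ne_zero h1 hz1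
    have hkey : 1 + (u₂ * a ^ (m + 1) + u₁) * z₁ ^ m
        = a * (1 + u₂ * (a * z₁) ^ m) := by
      rw [mul_pow]; ring
    have hab : 1 + u₂ * (a * z₁) ^ m ≠ 0 := h2
    have hc : ((m : ℂ) + 1) - 1 ≠ 0 := by
      simp only [add_sub_cancel_right]
      exact_mod_cast (by omega : m ≠ 0)
    simp only [if_neg hz1, if_neg hz2, hkey]
    have ham : a ^ m ≠ 0 := pow_ne_zero _ h1
    have hbm : (1 + u₂ * (a * z₁) ^ m) ^ m ≠ 0 := pow_ne_zero _ hab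
    rw [mul_pow a, mul_pow a]
    push_cast
    field_simp
    ring_nf
end

section
/- For k ≥ 2 and a ∈ ℂ, the function Ψ_k(z,u) = exp(−a·S_k(z,u)), where S_k(z,u) = (1 − e^{−u(k−1)z^{k−1}})/((k−1)z^{k−1}) with S_k(0,u) = u, is a representation of the Stokes groupoid Sto_k on the trivial line bundle: Ψ_k(g·h) = Ψ_k(g)·Ψ_k(h) for composable g, h, and Ψ_k(z,0) = 1. Moreover, for z ≠ 0, Ψ_k(z,u) = ψ(t(z,u))·ψ(z)^{−1} where ψ(z) = exp(a z^{−(k−1)}/(k−1)). -/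
open Complex

lemma stokes_key (c w u₁ u₂ : ℂ) (hc : c ≠ 0) (hw : w ≠ 0) :
    (1 - Complex.exp (-(u₂ * Complex.exp (c * u₁ * w) + u₁) * c * w)) / (c * w)
      = (1 - Complex.exp (-u₂ * c * (Complex.exp (c * u₁ * w) * w))) /
          (c * (Complex.exp (c * u₁ * w) * w))
        + (1 - Complex.exp (-u₁ * c * w)) / (c * w) := by
  set E := Complex.exp (c * u₁ * w) with hE
  have hEne : E ≠ 0 := Complex.exp_ne_zero _
  have hEB : E * Complex.exp (-u₁ * c * w) = 1 := by
    rw [hE, ← Complex.exp_add, show c * u₁ * w + -u₁ * c * w = 0 by ring, Complex.exp_zero]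
  rw [show -(u₂ * E + u₁) * c * w = -u₂ * c * (E * w) + -u₁ * c * w by ring,
    Complex.exp_add]
  set A := Complex.exp (-u₂ * c * (E * w)) with hA
  set B := Complex.exp (-u₁ * c * w) with hB
  field_simp
  linear_combination (1 - A) * hEB

/-- For `k ≥ 2` and `a ∈ ℂ`, the function `Ψ_k = exp(−a S_k)`, where
`S_k(z,u) = (1 − e^{−u(k−1)z^{k−1}})/((k−1)z^{k−1})` with `S_k(0,u) = u`, is a
representation of the Stokes groupoid `Sto_k` on the trivial line bundle:
it is multiplicative on composable arrows, equals `1` on identities, and for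
`z ≠ 0` it equals `ψ(t(z,u))·ψ(z)⁻¹` for the fundamental solution
`ψ(z) = exp(a z^{−(k−1)}/(k−1))`. -/
theorem stokes_rank_one_representation (k : ℕ) (hk : 2 ≤ k) (a : ℂ) :
    ∀ (S : ℂ × ℂ → ℂ),
      (S = fun p => if p.1 = 0 then p.2
        else (1 - Complex.exp (-p.2 * ((k : ℂ) - 1) * p.1 ^ (k - 1))) /
          (((k : ℂ) - 1) * p.1 ^ (k - 1))) →
    ∀ (Ψ : ℂ × ℂ → ℂ), (Ψ = fun p => Complex.exp (-a * S p)) →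
    ∀ (ψ : ℂ → ℂ), (ψ = fun z => Complex.exp (a * (z ^ (k - 1))⁻¹ / ((k : ℂ) - 1))) →
    -- multiplicativity on composable arrows
    (∀ z₁ u₁ z₂ u₂ : ℂ, z₂ = Complex.exp (u₁ * z₁ ^ (k - 1)) * z₁ →
      Ψ (z₁, u₂ * Complex.exp (((k : ℂ) - 1) * u₁ * z₁ ^ (k - 1)) + u₁) =
        Ψ (z₂, u₂) * Ψ (z₁, u₁)) ∧
    -- identities act trivially
    (∀ z : ℂ, Ψ (z, 0) = 1) ∧
    -- comparison with the fundamental solution away from the pole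
    (∀ z u : ℂ, z ≠ 0 →
      Ψ (z, u) = ψ (Complex.exp (u * z ^ (k - 1)) * z) * (ψ z)⁻¹) := by
  intro S hS Ψ hΨ ψ hψ
  have hcast : ((k : ℂ) - 1) = ((k - 1 : ℕ) : ℂ) := by
    push_cast [Nat.cast_sub (by omega : 1 ≤ k)]; ring
  have hc : ((k : ℂ) - 1) ≠ 0 := by
    rw [hcast]
    exact Nat.cast_ne_zero.mpr (by omega : k - 1 ≠ 0)
  subst hS hΨ hψ
  refine ⟨?_, ?_, ?_⟩
  · intro z₁ u₁ z₂ u₂ hz₂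
    by_cases h1 : z₁ = 0
    · subst h1
      have hz : z₂ = 0 := by simp [hz₂, zero_pow (by omega : k - 1 ≠ 0)]
      subst hz
      simp only [zero_pow (by omega : k - 1 ≠ 0), mul_zero, Complex.exp_zero, mul_one,
        if_pos rfl, if_true, eq_self_iff_true, ← Complex.exp_add]
      congr 1; ring
    · have hz : z₂ ≠ 0 := by
        rw [hz₂]; exact mul_ne_zero (Complex.exp_ne_zero _) h1
      have hw : z₁ ^ (k - 1) ≠ 0 := pow_ne_zero _ h1
      have hz2pow : z₂ ^ (k - 1) = Complex.exp (((k : ℂ) - 1) * u₁ * z₁ ^ (k - 1)) * z₁ ^ (k - 1) := by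
        rw [hz₂, mul_pow, ← Complex.exp_nat_mul, hcast]; ring_nf
      simp only [if_neg h1, if_neg hz, ← Complex.exp_add]
      congr 1
      rw [hz2pow, ← mul_add]
      congr 1
      have := stokes_key ((k : ℂ) - 1) (z₁ ^ (k - 1)) u₁ u₂ hc hw
      rw [show ((k : ℂ) - 1) * u₁ * z₁ ^ (k - 1) = u₁ * (((k : ℂ) - 1) * z₁ ^ (k - 1)) by ring] at this ⊢
      convert this using 3
  · intro z
    by_cases h : z = 0 <;>
      simp [h, Complex.exp_zero]
  · intro z u hz
    have hw : z ^ (k - 1) ≠ 0 := pow_ne_zero _ hz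
    simp only [if_neg hz, ← Complex.exp_neg, ← Complex.exp_add]
    congr 1
    rw [mul_pow, ← Complex.exp_nat_mul, ← hcast]
    have hE : Complex.exp (-u * ((k : ℂ) - 1) * z ^ (k - 1))
        = (Complex.exp (((k : ℂ) - 1) * (u * z ^ (k - 1))))⁻¹ := by
      rw [← Complex.exp_neg]; congr 1; ring
    rw [hE]
    have hEne : Complex.exp (((k : ℂ) - 1) * (u * z ^ (k - 1))) ≠ 0 := Complex.exp_ne_zero _
    field_simp
    ring
end

section
/- Let f̂(z) = Σ_{n≥0} n! z^{n+1} ∈ ℂ[[z]]. In the ring ℂ[[z,μ]] of formal power series in two variables, with t = z(1−zμ)^{−1} = Σ_{j≥0} z^{j+1}μ^j, the series t*f̂ − e^μ · s*f̂ (where s*f̂ = f̂(z) and t*f̂ = f̂(t) as formal substitution) equals −Σ_{i≥0}Σ_{j≥0} z^{i+1}μ^{i+j+1}/((i+1)(i+2)⋯(i+j+1)); in particular this double series converges on a neighborhood of (0,0). -/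
open MvPowerSeries Finset

namespace EulerResumAux

/-- The geometric series `(1 - zμ)⁻¹ = Σ (zμ)^k`, supported on the diagonal. -/
noncomputable def G : MvPowerSeries (Fin 2) ℂ :=
  fun d => if d 0 = d 1 then 1 else 0

lemma coeff_G (d : Fin 2 →₀ ℕ) : coeff d G = if d 0 = d 1 then 1 else 0 := rfl

lemma fin2_ext {d e : Fin 2 →₀ ℕ} (h0 : d 0 = e 0) (h1 : d 1 = e 1) : d = e := by
  ext i
  fin_cases i
  · exact h0
  · exact h1

/-- the exponent of `zμ` -/
noncomputable def e11 : Fin 2 →₀ ℕ := Finsupp.single 0 1 + Finsupp.single 1 1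

lemma e11_apply0 : e11 0 = 1 := by simp [e11, Finsupp.single_apply]
lemma e11_apply1 : e11 1 = 1 := by simp [e11, Finsupp.single_apply]

lemma X01_eq : (X 0 * X 1 : MvPowerSeries (Fin 2) ℂ) = monomial e11 1 := by
  rw [X, X, monomial_mul_monomial, one_mul]; rfl

lemma e11_le_iff (d : Fin 2 →₀ ℕ) : e11 ≤ d ↔ 1 ≤ d 0 ∧ 1 ≤ d 1 := by
  rw [Finsupp.le_def]
  constructor
  · intro h
    exact ⟨by simpa [e11_apply0] using h 0, by simpa [e11_apply1] using h 1⟩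
  · rintro ⟨h0, h1⟩ i
    fin_cases i
    · simpa [e11_apply0] using h0
    · simpa [e11_apply1] using h1

lemma sub_e11_apply0 (d : Fin 2 →₀ ℕ) : (d - e11) 0 = d 0 - 1 := by
  rw [Finsupp.tsub_apply, e11_apply0]
lemma sub_e11_apply1 (d : Fin 2 →₀ ℕ) : (d - e11) 1 = d 1 - 1 := by
  rw [Finsupp.tsub_apply, e11_apply1]

lemma eq_zero_iff (d : Fin 2 →₀ ℕ) : d = 0 ↔ d 0 = 0 ∧ d 1 = 0 := by
  constructor
  · rintro rfl; simp
  · rintro ⟨h0, h1⟩; exact fin2_ext (e := 0) (by simpa using h0) (by simpa using h1)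

lemma one_sub_mul_G : (1 - X 0 * X 1 : MvPowerSeries (Fin 2) ℂ) * G = 1 := by
  ext d
  rw [sub_mul, one_mul, map_sub, X01_eq, coeff_monomial_mul, coeff_one]
  simp only [coeff_G, sub_e11_apply0, sub_e11_apply1, eq_zero_iff, e11_le_iff, one_mul]
  split_ifs <;> first | ring1 | (exfalso; omega)

lemma inv_eq_G : ((1 - X 0 * X 1 : MvPowerSeries (Fin 2) ℂ))⁻¹ = G := by
  apply (MvPowerSeries.inv_eq_iff_mul_eq_one ?_).mpr
  · rw [mul_comm]; exact one_sub_mul_G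
  · simp

lemma G_eq : G = 1 + monomial e11 1 * G := by
  have h := one_sub_mul_G
  rw [sub_mul, one_mul, sub_eq_iff_eq_add] at h
  rw [X01_eq] at h
  exact h

lemma pow_eq (n : ℕ) : G ^ (n + 2) = G ^ (n + 1) + monomial e11 1 * G ^ (n + 2) :=
  calc G ^ (n + 2) = G ^ (n + 1) * G := pow_succ G (n + 1)
    _ = G ^ (n + 1) * (1 + monomial e11 1 * G) := by rw [← G_eq]
    _ = G ^ (n + 1) + monomial e11 1 * (G ^ (n + 1) * G) := by ring
    _ = G ^ (n + 1) + monomial e11 1 * G ^ (n + 2) := by rw [← pow_succ]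

lemma coeff_G_pow (n : ℕ) (d : Fin 2 →₀ ℕ) :
    coeff d (G ^ (n + 1)) = if d 0 = d 1 then (((n + d 0).choose n : ℕ) : ℂ) else 0 := by
  induction n generalizing d with
  | zero =>
    rw [pow_one, coeff_G]
    by_cases hd : d 0 = d 1 <;> simp [hd]
  | succ n ih =>
    suffices h : ∀ k, ∀ d : Fin 2 →₀ ℕ, d 0 = k →
        coeff d (G ^ (n + 2)) = if d 0 = d 1 then (((n + 1 + d 0).choose (n + 1) : ℕ) : ℂ) else 0 by
      exact h (d 0) d rfl
    intro k
    induction k using Nat.strong_induction_on with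
    | _ k IH =>
      intro d hd
      have h1 := congrArg (coeff d) (pow_eq n)
      rw [map_add, coeff_monomial_mul, one_mul] at h1
      by_cases hle : e11 ≤ d
      · rw [if_pos hle] at h1
        rw [e11_le_iff] at hle
        have h0 : 1 ≤ d 0 := hle.1
        have h1' : 1 ≤ d 1 := hle.2
        have hrec := IH (k - 1) (by omega) (d - e11) (by rw [sub_e11_apply0]; omega)
        rw [h1, hrec, ih d, sub_e11_apply0, sub_e11_apply1]
        by_cases hdd : d 0 = d 1
        · rw [if_pos hdd, if_pos (by omega), if_pos hdd]
          have harith : n + 1 + (d 0 - 1) = n + d 0 := by omega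
          rw [harith]
          have hpascal : (n + d 0).choose n + (n + d 0).choose (n + 1)
              = (n + 1 + d 0).choose (n + 1) := by
            rw [show n + 1 + d 0 = (n + d 0) + 1 from by omega]
            exact (Nat.choose_succ_succ _ _).symm
          push_cast [← hpascal]
          ring
        · rw [if_neg hdd, if_neg (by omega), if_neg hdd, add_zero]
      · rw [if_neg hle] at h1
        rw [e11_le_iff] at hle
        rw [h1, add_zero, ih d]
        by_cases hdd : d 0 = d 1
        · rw [if_pos hdd, if_pos hdd]
          have hd0 : d 0 = 0 := by omega
          rw [hd0]
          norm_num
        · rw [if_neg hdd, if_neg hdd]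

lemma coeff_T_pow (n : ℕ) (d : Fin 2 →₀ ℕ) :
    coeff d ((X 0 * (1 - X 0 * X 1 : MvPowerSeries (Fin 2) ℂ)⁻¹) ^ (n + 1))
      = if n + 1 ≤ d 0 ∧ d 0 - (n + 1) = d 1 then (((n + d 1).choose n : ℕ) : ℂ) else 0 := by
  rw [inv_eq_G, mul_pow, X_pow_eq, coeff_monomial_mul]
  have hle : (Finsupp.single 0 (n + 1) : Fin 2 →₀ ℕ) ≤ d ↔ n + 1 ≤ d 0 :=
    Finsupp.single_le_iff
  by_cases h : (Finsupp.single 0 (n + 1) : Fin 2 →₀ ℕ) ≤ d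
  · rw [if_pos h, one_mul, coeff_G_pow]
    have hd0 : (d - (Finsupp.single 0 (n + 1) : Fin 2 →₀ ℕ)) 0 = d 0 - (n + 1) := by
      rw [Finsupp.tsub_apply, Finsupp.single_eq_same]
    have hd1 : (d - (Finsupp.single 0 (n + 1) : Fin 2 →₀ ℕ)) 1 = d 1 := by
      rw [Finsupp.tsub_apply, Finsupp.single_eq_of_ne (by decide)]
      simp
    rw [hd0, hd1]
    rw [hle] at h
    by_cases h2 : d 0 - (n + 1) = d 1
    · rw [if_pos h2, if_pos ⟨h, h2⟩, h2]
    · rw [if_neg h2, if_neg (by tauto)]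
  · rw [if_neg h, hle] at *
    rw [if_neg (by tauto)]

/-- `(a)! * (a+1)(a+2)⋯b = b!` -/
lemma fact_prod_Icc : ∀ (b a : ℕ), a ≤ b →
    a.factorial * (∏ r ∈ Finset.Icc (a + 1) b, r) = b.factorial := by
  intro b
  induction b with
  | zero =>
    intro a ha
    have : a = 0 := by omega
    subst this; simp
  | succ b ihb =>
    intro a ha
    rcases eq_or_lt_of_le ha with rfl | h'
    · rw [show Finset.Icc (b + 1 + 1) (b + 1) = ∅ from Finset.Icc_eq_empty_of_lt (by omega)]
      simp
    · have hab : a ≤ b := by omega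
      rw [Finset.prod_Icc_succ_top (by omega), ← mul_assoc, ihb a hab, Nat.factorial_succ]
      ring

end EulerResumAux

open EulerResumAux in
/-- In `ℂ[[z,μ]]` (with `z = X 0`, `μ = X 1`), let `f̂(z) = Σ n! z^{n+1}`,
let `t = z(1−zμ)⁻¹`, let `t*f̂ = f̂(t)` be the formal substitution (defined
coefficient-wise; the sum over `n` is finite in each coefficient since `t` has
`z`-order one), and let `e^μ = Σ μ^m/m!`.  Then
`t*f̂ − e^μ · s*f̂ = −Σ_{i,j≥0} z^{i+1} μ^{i+j+1} / ((i+1)(i+2)⋯(i+j+1))`,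
and in particular this double series converges on a neighbourhood of `(0,0)`
(e.g. for `‖z‖, ‖μ‖ < 1/2`). -/
theorem resummation_of_euler_series :
    ∀ T Eμ fz fT RHS : MvPowerSeries (Fin 2) ℂ,
      (T = X 0 * (1 - X 0 * X 1)⁻¹) →
      (∀ d : Fin 2 →₀ ℕ, coeff d Eμ =
        if d 0 = 0 then (((d 1).factorial : ℕ) : ℂ)⁻¹ else 0) →
      (∀ d : Fin 2 →₀ ℕ, coeff d fz =
        if d 1 = 0 ∧ 1 ≤ d 0 then (((d 0 - 1).factorial : ℕ) : ℂ) else 0) →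
      (∀ d : Fin 2 →₀ ℕ, coeff d fT =
        ∑ n ∈ Finset.range (d 0 + 1), ((n.factorial : ℕ) : ℂ) * coeff d (T ^ (n + 1))) →
      (∀ d : Fin 2 →₀ ℕ, coeff d RHS =
        if 1 ≤ d 0 ∧ d 0 ≤ d 1 then -(∏ r ∈ Finset.Icc (d 0) (d 1), (r : ℂ))⁻¹ else 0) →
      (fT - Eμ * fz = RHS) ∧
      (∀ z μ : ℂ, ‖z‖ < 1 / 2 → ‖μ‖ < 1 / 2 →
        Summable fun p : ℕ × ℕ =>
          z ^ (p.1 + 1) * μ ^ (p.1 + p.2 + 1) *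
            (∏ r ∈ Finset.Icc (p.1 + 1) (p.1 + p.2 + 1), (r : ℂ))⁻¹) := by
  intro T Eμ fz fT RHS hT hE hf hfT hR
  constructor
  · -- main identity
    -- coefficient of fT
    have hfT' : ∀ d : Fin 2 →₀ ℕ, coeff d fT =
        if d 1 + 1 ≤ d 0 then
          (((d 0 - 1).factorial : ℕ) : ℂ) * ((((d 1).factorial : ℕ) : ℂ))⁻¹ else 0 := by
      intro d
      rw [hfT d]
      subst hT
      by_cases h : d 1 + 1 ≤ d 0
      · rw [if_pos h]
        rw [Finset.sum_eq_single_of_mem (d 0 - d 1 - 1)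
          (Finset.mem_range.mpr (by omega)) ?_]
        · rw [coeff_T_pow, if_pos (by constructor <;> omega)]
          have hnat : (d 0 - 1).choose (d 0 - d 1 - 1) * (d 0 - d 1 - 1).factorial
              * ((d 0 - 1) - (d 0 - d 1 - 1)).factorial = (d 0 - 1).factorial :=
            Nat.choose_mul_factorial_mul_factorial (by omega)
          rw [show (d 0 - 1) - (d 0 - d 1 - 1) = d 1 from by omega] at hnat
          rw [show d 0 - d 1 - 1 + d 1 = d 0 - 1 from by omega]
          have hne : (((d 1).factorial : ℕ) : ℂ) ≠ 0 := by
            exact_mod_cast Nat.cast_ne_zero.mpr (Nat.factorial_ne_zero _)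
          field_simp
          push_cast [← hnat]
          ring
        · intro b _ hb
          rw [coeff_T_pow, if_neg (by omega), mul_zero]
      · rw [if_neg h]
        apply Finset.sum_eq_zero
        intro n _
        rw [coeff_T_pow, if_neg (by omega), mul_zero]
    -- coefficient of Eμ * fz
    have hEf : ∀ d : Fin 2 →₀ ℕ, coeff d (Eμ * fz) =
        if 1 ≤ d 0 then ((((d 1).factorial : ℕ) : ℂ))⁻¹ * (((d 0 - 1).factorial : ℕ) : ℂ)
        else 0 := by
      intro d
      rw [coeff_mul]
      have hd : (Finsupp.single 1 (d 1) : Fin 2 →₀ ℕ) + Finsupp.single 0 (d 0) = d := by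
        apply fin2_ext <;> simp [Finsupp.single_apply, show ¬((1 : Fin 2) = 0) by decide,
          show ¬((0 : Fin 2) = 1) by decide]
      rw [Finset.sum_eq_single_of_mem ((Finsupp.single 1 (d 1) : Fin 2 →₀ ℕ),
          (Finsupp.single 0 (d 0) : Fin 2 →₀ ℕ))
        (Finset.HasAntidiagonal.mem_antidiagonal.mpr hd) ?_]
      · dsimp only
        rw [hE, hf]
        rw [Finsupp.single_eq_of_ne (show (1 : Fin 2) ≠ 0 by decide),
          Finsupp.single_eq_same, Finsupp.single_eq_same,
          Finsupp.single_eq_of_ne (show (0 : Fin 2) ≠ 1 by decide)]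
        rw [if_pos rfl]
        by_cases h1 : 1 ≤ d 0
        · rw [if_pos ⟨rfl, h1⟩, if_pos h1]
        · rw [if_neg (by tauto), if_neg h1, mul_zero]
      · rintro ⟨u, v⟩ hmem hne
        rw [Finset.HasAntidiagonal.mem_antidiagonal] at hmem
        dsimp only at hmem hne ⊢
        rw [hE, hf]
        by_cases hu0 : u 0 = 0
        · by_cases hv1 : v 1 = 0
          · by_cases hv0 : 1 ≤ v 0
            · exfalso
              apply hne
              have hu : u = Finsupp.single 1 (u 1) := by
                apply fin2_ext
                · rw [Finsupp.single_eq_of_ne (show (0 : Fin 2) ≠ 1 by decide), hu0]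
                · rw [Finsupp.single_eq_same]
              have hv : v = Finsupp.single 0 (v 0) := by
                apply fin2_ext
                · rw [Finsupp.single_eq_same]
                · rw [Finsupp.single_eq_of_ne (show (1 : Fin 2) ≠ 0 by decide), hv1]
              have hsum0 : u 0 + v 0 = d 0 := by
                have := congrArg (fun f : Fin 2 →₀ ℕ => f 0) hmem
                simpa using this
              have hsum1 : u 1 + v 1 = d 1 := by
                have := congrArg (fun f : Fin 2 →₀ ℕ => f 1) hmem
                simpa using this
              have hv0d : v 0 = d 0 := by omega
              have hu1d : u 1 = d 1 := by omega
              rw [Prod.mk.injEq]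
              constructor
              · rw [hu, hu1d]
              · rw [hv, hv0d]
            · exact mul_eq_zero_of_right _ (if_neg (show ¬(v 1 = 0 ∧ 1 ≤ v 0) by tauto))
          · exact mul_eq_zero_of_right _ (if_neg (show ¬(v 1 = 0 ∧ 1 ≤ v 0) by tauto))
        · exact mul_eq_zero_of_left (if_neg hu0) _
    -- conclude
    ext d
    rw [map_sub, hfT' d, hEf d, hR d]
    by_cases h0 : 1 ≤ d 0
    · by_cases h1 : d 0 ≤ d 1
      · rw [if_neg (by omega), if_pos h0, if_pos ⟨h0, h1⟩, zero_sub]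
        have hprod : (d 0 - 1).factorial * (∏ r ∈ Finset.Icc (d 0) (d 1), r)
            = (d 1).factorial := by
          have := fact_prod_Icc (d 1) (d 0 - 1) (by omega)
          rwa [show d 0 - 1 + 1 = d 0 from by omega] at this
        have hc : (∏ r ∈ Finset.Icc (d 0) (d 1), (r : ℂ))
            = ((∏ r ∈ Finset.Icc (d 0) (d 1), r : ℕ) : ℂ) := by push_cast; ring
        rw [hc]
        have hPne : ((∏ r ∈ Finset.Icc (d 0) (d 1), r : ℕ) : ℂ) ≠ 0 := by
          rw [Nat.cast_ne_zero]
          apply Finset.prod_ne_zero_iff.mpr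
          intro r hr
          rw [Finset.mem_Icc] at hr
          omega
        have hfne : (((d 1).factorial : ℕ) : ℂ) ≠ 0 := by
          exact_mod_cast Nat.cast_ne_zero.mpr (Nat.factorial_ne_zero _)
        have hPne' : (∏ r ∈ Finset.Icc (d 0) (d 1), (r : ℂ)) ≠ 0 := by
          rw [hc]; exact hPne
        rw [neg_inj]
        field_simp [hfne, hPne']
        push_cast [← hprod]
        ring
      · rw [if_pos (by omega), if_pos h0, if_neg (by tauto)]
        ring
    · rw [if_neg (by omega), if_neg h0, if_neg (by tauto)]
      ring
  · -- summability
    intro z μ hz hμ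
    set a : ℝ := ‖z‖ * ‖μ‖ with ha
    have hz0 := norm_nonneg z
    have hμ0 := norm_nonneg μ
    have ha0 : 0 ≤ a := by positivity
    have ha1 : a < 1 := by nlinarith
    have hb1 : ‖μ‖ < 1 := by linarith
    have h1 : Summable fun i : ℕ => a ^ (i + 1) := by
      have := (summable_geometric_of_lt_one ha0 ha1).mul_left a
      simpa [pow_succ'] using this
    have h2 : Summable fun j : ℕ => ‖μ‖ ^ j := summable_geometric_of_lt_one hμ0 hb1
    have hprod : Summable fun p : ℕ × ℕ => a ^ (p.1 + 1) * ‖μ‖ ^ p.2 :=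
      h1.mul_of_nonneg h2 (fun i => by positivity) (fun j => by positivity)
    apply Summable.of_norm_bounded hprod
    rintro ⟨i, j⟩
    simp only
    have hPge : (1 : ℕ) ≤ ∏ r ∈ Finset.Icc (i + 1) (i + j + 1), r := by
      apply Finset.one_le_prod'
      intro r hr
      rw [Finset.mem_Icc] at hr
      omega
    have hc : (∏ r ∈ Finset.Icc (i + 1) (i + j + 1), (r : ℂ))
        = ((∏ r ∈ Finset.Icc (i + 1) (i + j + 1), r : ℕ) : ℂ) := by push_cast; ring
    rw [norm_mul, norm_mul, norm_pow, norm_pow, hc, norm_inv]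
    have hnorm : ‖((∏ r ∈ Finset.Icc (i + 1) (i + j + 1), r : ℕ) : ℂ)‖
        = ((∏ r ∈ Finset.Icc (i + 1) (i + j + 1), r : ℕ) : ℝ) := by
      rw [Complex.norm_natCast]
    rw [hnorm]
    have hinv : (((∏ r ∈ Finset.Icc (i + 1) (i + j + 1), r : ℕ) : ℝ))⁻¹ ≤ 1 := by
      rw [inv_le_one_iff₀]
      right
      exact_mod_cast hPge
    have hb : ‖z‖ ^ (i + 1) * ‖μ‖ ^ (i + j + 1) = a ^ (i + 1) * ‖μ‖ ^ j := by
      rw [ha, mul_pow]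
      rw [show i + j + 1 = (i + 1) + j from by omega, pow_add]
      ring
    calc ‖z‖ ^ (i + 1) * ‖μ‖ ^ (i + j + 1)
          * (((∏ r ∈ Finset.Icc (i + 1) (i + j + 1), r : ℕ) : ℝ))⁻¹
        ≤ ‖z‖ ^ (i + 1) * ‖μ‖ ^ (i + j + 1) * 1 := by
          apply mul_le_mul_of_nonneg_left hinv (by positivity)
      _ = a ^ (i + 1) * ‖μ‖ ^ j := by rw [mul_one, hb]
end
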